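/- The graph G constructed from p blocks of (k−1,τ)-Ramsey graphs (ring-of-blocks construction) is k-claw-free: it contains no induced K_{1,k}. -/

import Mathlib

open Finset

variable {V : Type*}

/-- `s` is an independent set of `G`. -/
def IsIndep (G : SimpleGraph V) (s : Finset V) : Prop :=
  ∀ u ∈ s, ∀ w ∈ s, u ≠ w → ¬ G.Adj u w

/-- The independence number `α(G)`. -/
noncomputable def indepNum [Fintype V] (G : SimpleGraph V) : ℕ :=
  sSup {n | ∃ s : Finset V, s.card = n ∧ IsIndep G s}

/-- The clique number `ω(G)`. -/
noncomputable def cliqueNum [Fintype V] (G : SimpleGraph V) : ℕ :=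
  sSup {n | ∃ s : Finset V, s.card = n ∧ G.IsClique ↑s}

/-- A graph is `k`-claw-free if it contains no induced `K_{1,k}`. -/
def IsClawFree (k : ℕ) (G : SimpleGraph V) : Prop :=
  ¬ ∃ (v : V) (s : Finset V), s.card = k ∧ (∀ u ∈ s, G.Adj v u) ∧
      ∀ u ∈ s, ∀ w ∈ s, u ≠ w → ¬ G.Adj u w

/-- Vertices of the auxiliary graph `G'`: block index `i : ZMod p` together with a
vertex of the copy `H¹_i` of `H`, a vertex of the copy `H²_i` of `H`, or a vertex of
the clique `Q_i = K_{τ-1}`. -/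
abbrev RingVert (V : Type*) (p τ : ℕ) := ZMod p × (V ⊕ V ⊕ Fin (τ - 1))

/-- Matching edges of `G'`: in block `i`, either the matching edge joining `v ∈ H¹_i`
to its copy in `H²_i`, or the matching edge joining the `j`-th matched vertex of
`H²_i` to the `j`-th vertex of `Q_i`, or the matching edge joining the `j`-th vertex
of `Q_i` to the `j`-th matched vertex of `H¹_{i+1}`. -/
abbrev RingEdge (V : Type*) (p τ : ℕ) := ZMod p × (V ⊕ Fin (τ - 1) ⊕ Fin (τ - 1))

/-- The non-matching edges of `G'`: edges inside each copy `H¹_i` and `H²_i` of `H`,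
and all edges inside each clique `Q_i`. -/
def ringBase (H : SimpleGraph V) (p τ : ℕ) : SimpleGraph (RingVert V p τ) :=
  SimpleGraph.fromRel (fun x y =>
    x.1 = y.1 ∧
      (match x.2, y.2 with
        | Sum.inl a, Sum.inl b => H.Adj a b
        | Sum.inr (Sum.inl a), Sum.inr (Sum.inl b) => H.Adj a b
        | Sum.inr (Sum.inr _), Sum.inr (Sum.inr _) => True
        | _, _ => False))

/-- The two endpoints in `G'` of a matching edge, where `f i : Fin (τ-1) ↪ V`
selects the `τ-1` vertices of `H²_i` matched to `Q_i`, and `g i : Fin (τ-1) ↪ V`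
selects the `τ-1` vertices of `H¹_i` matched to `Q_{i-1}`. -/
def ringEnds (p τ : ℕ) (f g : ZMod p → Fin (τ - 1) ↪ V) :
    RingEdge V p τ → Set (RingVert V p τ)
  | (i, Sum.inl v) => {(i, Sum.inl v), (i, Sum.inr (Sum.inl v))}
  | (i, Sum.inr (Sum.inl j)) => {(i, Sum.inr (Sum.inl (f i j))), (i, Sum.inr (Sum.inr j))}
  | (i, Sum.inr (Sum.inr j)) => {(i, Sum.inr (Sum.inr j)), (i + 1, Sum.inl (g (i + 1) j))}

/-- The graph `G` of the ring-of-blocks construction: one vertex per matching edge of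
`G'`, two vertices adjacent iff the corresponding matching edges do not form an
induced matching in `G'` (they share an endpoint or some edge of `G'` joins their
endpoint sets). -/
def ringGraph (H : SimpleGraph V) (p τ : ℕ) (f g : ZMod p → Fin (τ - 1) ↪ V) :
    SimpleGraph (RingEdge V p τ) :=
  SimpleGraph.fromRel (fun e e' =>
    ∃ x ∈ ringEnds p τ f g e, ∃ y ∈ ringEnds p τ f g e',
      x = y ∨ (ringBase H p τ).Adj x y)

section helpers

variable {p τ : ℕ} {H : SimpleGraph V} {f g : ZMod p → Fin (τ - 1) ↪ V}

lemma card_le_indepNum [Fintype V] {t : Finset V} (ht : IsIndep H t) :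
    t.card ≤ indepNum H := by
  apply le_csSup
  · exact ⟨Fintype.card V, fun n hn => by
      obtain ⟨s, rfl, -⟩ := hn; simpa using s.card_le_univ⟩
  · exact ⟨t, rfl, ht⟩

lemma ringBase_adj {x y : RingVert V p τ} :
    (ringBase H p τ).Adj x y ↔ x ≠ y ∧ x.1 = y.1 ∧
      (match x.2, y.2 with
        | Sum.inl a, Sum.inl b => H.Adj a b
        | Sum.inr (Sum.inl a), Sum.inr (Sum.inl b) => H.Adj a b
        | Sum.inr (Sum.inr _), Sum.inr (Sum.inr _) => True
        | _, _ => False) := by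
  obtain ⟨i, a⟩ := x; obtain ⟨j, b⟩ := y
  rw [ringBase, SimpleGraph.fromRel_adj]
  rcases a with a | a | a <;> rcases b with b | b | b <;>
    simp [eq_comm, H.adj_comm] <;> tauto

lemma ringGraph_adj {e e' : RingEdge V p τ} :
    (ringGraph H p τ f g).Adj e e' ↔ e ≠ e' ∧
      ∃ x ∈ ringEnds p τ f g e, ∃ y ∈ ringEnds p τ f g e',
        x = y ∨ (ringBase H p τ).Adj x y := by
  rw [ringGraph, SimpleGraph.fromRel_adj]
  constructor
  · rintro ⟨hne, h | h⟩
    · exact ⟨hne, h⟩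
    · obtain ⟨x, hx, y, hy, h | h⟩ := h
      · exact ⟨hne, y, hy, x, hx, Or.inl h.symm⟩
      · exact ⟨hne, y, hy, x, hx, Or.inr h.symm⟩
  · rintro ⟨hne, h⟩; exact ⟨hne, Or.inl h⟩

end helpers
section helpers2
variable {p τ : ℕ} {H : SimpleGraph V} {f g : ZMod p → Fin (τ - 1) ↪ V}

lemma classify1 {i : ZMod p} {v : V} {e' : RingEdge V p τ}
    (h : (ringGraph H p τ f g).Adj (i, Sum.inl v) e') :
    (∃ w, e' = (i, Sum.inl w) ∧ H.Adj v w) ∨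
    (∃ m, e' = (i, Sum.inr (Sum.inl m)) ∧ (f i m = v ∨ H.Adj (f i m) v)) ∨
    (∃ m j, e' = (j, Sum.inr (Sum.inr m)) ∧ j + 1 = i ∧
      (g i m = v ∨ H.Adj (g i m) v)) := by
  rw [ringGraph_adj] at h
  obtain ⟨hne, x, hx, y, hy, hxy⟩ := h
  simp only [ringEnds, Set.mem_insert_iff, Set.mem_singleton_iff] at hx
  obtain ⟨j, c⟩ := e'
  rcases c with w | m | m <;>
    simp only [ringEnds, Set.mem_insert_iff, Set.mem_singleton_iff] at hy <;>
    rcases hx with rfl | rfl <;> rcases hy with rfl | rfl <;>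
    rcases hxy with h | h <;>
    simp_all [ringBase_adj, Prod.ext_iff]
  · exact Or.inr h.2.2.symm
  · exact Or.inr h.2.2.symm

end helpers2
section helpers3
variable {p τ : ℕ} {H : SimpleGraph V} {f g : ZMod p → Fin (τ - 1) ↪ V}

lemma classify2 {i : ZMod p} {m0 : Fin (τ - 1)} {e' : RingEdge V p τ}
    (h : (ringGraph H p τ f g).Adj (i, Sum.inr (Sum.inl m0)) e') :
    (∃ w, e' = (i, Sum.inl w) ∧ (w = f i m0 ∨ H.Adj (f i m0) w)) ∨
    (∃ m, e' = (i, Sum.inr (Sum.inl m))) ∨ (∃ m, e' = (i, Sum.inr (Sum.inr m))) := by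
  rw [ringGraph_adj] at h
  obtain ⟨hne, x, hx, y, hy, hxy⟩ := h
  simp only [ringEnds, Set.mem_insert_iff, Set.mem_singleton_iff] at hx
  obtain ⟨j, c⟩ := e'
  rcases c with w | m | m <;>
    simp only [ringEnds, Set.mem_insert_iff, Set.mem_singleton_iff] at hy <;>
    rcases hx with rfl | rfl <;> rcases hy with rfl | rfl <;>
    rcases hxy with h | h <;>
    simp_all [ringBase_adj, Prod.ext_iff]
  · exact Or.inl (h.1 ▸ h.2.symm)
  · exact Or.inr (h.2.1 ▸ h.2.2)

lemma classify3 {i : ZMod p} {m0 : Fin (τ - 1)} {e' : RingEdge V p τ}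
    (h : (ringGraph H p τ f g).Adj (i, Sum.inr (Sum.inr m0)) e') :
    (∃ w, e' = (i + 1, Sum.inl w) ∧ (w = g (i + 1) m0 ∨ H.Adj (g (i + 1) m0) w)) ∨
    (∃ m, e' = (i, Sum.inr (Sum.inl m))) ∨ (∃ m, e' = (i, Sum.inr (Sum.inr m))) := by
  rw [ringGraph_adj] at h
  obtain ⟨hne, x, hx, y, hy, hxy⟩ := h
  simp only [ringEnds, Set.mem_insert_iff, Set.mem_singleton_iff] at hx
  obtain ⟨j, c⟩ := e'
  rcases c with w | m | m <;>
    simp only [ringEnds, Set.mem_insert_iff, Set.mem_singleton_iff] at hy <;>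
    rcases hx with rfl | rfl <;> rcases hy with rfl | rfl <;>
    rcases hxy with h | h <;>
    simp_all [ringBase_adj, Prod.ext_iff]
  · exact Or.inl (h.1 ▸ h.2.symm)
  · exact Or.inr (h.2.1 ▸ h.2.2)

end helpers3
section helpers4
variable {p τ : ℕ} {H : SimpleGraph V} {f g : ZMod p → Fin (τ - 1) ↪ V}

lemma baseH1 {i : ZMod p} {u w : V} (h : H.Adj u w) :
    (ringBase H p τ).Adj (i, Sum.inl u) (i, Sum.inl w) :=
  ringBase_adj.mpr ⟨by simp [h.ne], rfl, h⟩

lemma adj_of_Q_ends {e1 e2 : RingEdge V p τ} {i : ZMod p} {m1 m2 : Fin (τ - 1)}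
    (hne : e1 ≠ e2)
    (h1 : ((i, Sum.inr (Sum.inr m1)) : RingVert V p τ) ∈ ringEnds p τ f g e1)
    (h2 : ((i, Sum.inr (Sum.inr m2)) : RingVert V p τ) ∈ ringEnds p τ f g e2) :
    (ringGraph H p τ f g).Adj e1 e2 := by
  refine ringGraph_adj.mpr ⟨hne, _, h1, _, h2, ?_⟩
  by_cases h : m1 = m2
  · exact Or.inl (by rw [h])
  · exact Or.inr (ringBase_adj.mpr ⟨by simp [h], rfl, trivial⟩)

end helpers4

/-- Classifying key for the leaves of a claw. -/
def keyV {V : Type*} {p τ : ℕ} : RingEdge V p τ → V ⊕ Fin 2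
  | (_, Sum.inl w) => Sum.inl w
  | (_, Sum.inr (Sum.inl _)) => Sum.inr 0
  | (_, Sum.inr (Sum.inr _)) => Sum.inr 1

set_option maxHeartbeats 1000000 in

/-- The ring-of-blocks graph `G` built from `p` blocks of a `(k−1,τ)`-Ramsey graph
`H` (so `α(H) ≤ k−2` and `ω(H) ≤ τ−1`) is `k`-claw-free. -/
theorem ring_clawFree [Fintype V] [DecidableEq V] (H : SimpleGraph V)
    (k p τ : ℕ) [NeZero p] (hk : 4 ≤ k) (hτ : 3 ≤ τ)
    (hα : indepNum H ≤ k - 2) (hω : cliqueNum H ≤ τ - 1)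
    (f g : ZMod p → Fin (τ - 1) ↪ V) :
    IsClawFree k (ringGraph H p τ f g) := by
  classical
  rintro ⟨⟨i, c⟩, s, hcard, hadj, hind⟩
  rcases c with v | m0 | m0
  · -- center (i, Sum.inl v)
    have hinj : Set.InjOn keyV (s : Set (RingEdge V p τ)) := by
      intro e1 h1 e2 h2 hkey
      by_contra hne
      rcases classify1 (hadj e1 h1) with ⟨w1, rfl, -⟩ | ⟨m1, rfl, -⟩ | ⟨m1, j1, rfl, hj1, -⟩ <;>
        rcases classify1 (hadj e2 h2) with ⟨w2, rfl, -⟩ | ⟨m2, rfl, -⟩ | ⟨m2, j2, rfl, hj2, -⟩ <;>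
        simp [keyV] at hkey
      · exact hne (by rw [hkey])
      · exact hind _ h1 _ h2 hne (adj_of_Q_ends (i := i) (m1 := m1) (m2 := m2) hne
          (by simp [ringEnds]) (by simp [ringEnds]))
      · have hj : j1 = j2 := by
          have := hj1.trans hj2.symm; exact add_right_cancel this
        subst hj
        exact hind _ h1 _ h2 hne (adj_of_Q_ends (i := j1) (m1 := m1) (m2 := m2) hne
          (by simp [ringEnds]) (by simp [ringEnds]))
    have hcardA : (s.image keyV).card = k := by
      rw [Finset.card_image_of_injOn hinj, hcard]
    set A := s.image keyV with hA
    set T : Finset V := Finset.univ.filter (fun w => Sum.inl w ∈ A) with hT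
    have hTmem : ∀ w ∈ T, (i, Sum.inl w) ∈ s ∧ H.Adj v w := by
      intro w hw
      rw [hT, Finset.mem_filter] at hw
      obtain ⟨e', he', hke⟩ := Finset.mem_image.mp hw.2
      rcases classify1 (hadj e' he') with ⟨w', rfl, hvw⟩ | ⟨m, rfl, -⟩ | ⟨m, j, rfl, -, -⟩ <;>
        simp [keyV] at hke
      exact hke ▸ ⟨he', hvw⟩
    have hTind : IsIndep H T := by
      intro a ha b hb hab hadj'
      exact hind _ (hTmem a ha).1 _ (hTmem b hb).1 (by simp [hab])
        (ringGraph_adj.mpr ⟨by simp [hab], (i, Sum.inl a), by simp [ringEnds],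
          (i, Sum.inl b), by simp [ringEnds], Or.inr (baseH1 hadj')⟩)
    have hTcard : T.card ≤ k - 2 := le_trans (card_le_indepNum hTind) hα
    have hsub : A ⊆ T.image Sum.inl ∪ {Sum.inr 0, Sum.inr 1} := by
      intro a ha
      rcases a with w | b
      · exact Finset.mem_union_left _ (Finset.mem_image_of_mem _ (by simp [hT, ha]))
      · exact Finset.mem_union_right _ (by fin_cases b <;> simp)
    have hk2 : k ≤ T.card + 2 := by
      calc k = A.card := hcardA.symm
        _ ≤ (T.image Sum.inl ∪ {Sum.inr 0, Sum.inr 1}).card := Finset.card_le_card hsub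
        _ ≤ (T.image Sum.inl).card + ({Sum.inr 0, Sum.inr 1} : Finset (V ⊕ Fin 2)).card :=
            Finset.card_union_le _ _
        _ ≤ T.card + 2 := add_le_add Finset.card_image_le
            (le_trans (Finset.card_insert_le _ _) (by simp))
    have h1A : Sum.inr 1 ∈ A := by
      by_contra h1
      have hsub' : A ⊆ insert (Sum.inr 0) (T.image Sum.inl) := by
        intro a ha
        rcases a with w | b
        · exact Finset.mem_insert_of_mem (Finset.mem_image_of_mem _ (by simp [hT, ha]))
        · fin_cases b
          · exact Finset.mem_insert_self _ _
          · exact absurd ha h1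
      have : k ≤ T.card + 1 := by
        calc k = A.card := hcardA.symm
          _ ≤ (insert (Sum.inr 0) (T.image Sum.inl)).card := Finset.card_le_card hsub'
          _ ≤ (T.image Sum.inl).card + 1 := Finset.card_insert_le _ _
          _ ≤ T.card + 1 := by
              exact add_le_add_left Finset.card_image_le 1
      omega
    obtain ⟨e1, he1, hke1⟩ := Finset.mem_image.mp h1A
    rcases classify1 (hadj e1 he1) with ⟨w, rfl, -⟩ | ⟨m, rfl, -⟩ | ⟨m, j, rfl, hj, hg⟩ <;>
      simp [keyV] at hke1
    have hend : ((i, Sum.inl (g i m)) : RingVert V p τ) ∈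
        ringEnds p τ f g (j, Sum.inr (Sum.inr m)) := by
      simp [ringEnds, hj]
    have hTpos : 0 < T.card := by omega
    obtain ⟨w0, hw0⟩ := Finset.card_pos.mp hTpos
    obtain ⟨hw0s, hw0adj⟩ := hTmem w0 hw0
    rcases hg with hgv | hgadj
    · refine hind _ he1 _ hw0s (by simp) (ringGraph_adj.mpr ⟨by simp, _, hend,
        (i, Sum.inl w0), by simp [ringEnds], Or.inr ?_⟩)
      rw [hgv]; exact baseH1 hw0adj
    · set u := g i m with hu
      have huT : ∀ w ∈ T, u ≠ w ∧ ¬ H.Adj u w := by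
        intro w hw
        obtain ⟨hws, hwadj⟩ := hTmem w hw
        constructor
        · rintro rfl
          exact hind _ he1 _ hws (by simp) (ringGraph_adj.mpr ⟨by simp, _, hend,
            (i, Sum.inl u), by simp [ringEnds], Or.inl rfl⟩)
        · intro hadj'
          exact hind _ he1 _ hws (by simp) (ringGraph_adj.mpr ⟨by simp, _, hend,
            (i, Sum.inl w), by simp [ringEnds], Or.inr (baseH1 hadj')⟩)
      have hins : IsIndep H (insert u T) := by
        intro a ha b hb hab
        rcases Finset.mem_insert.mp ha with rfl | ha' <;>
          rcases Finset.mem_insert.mp hb with rfl | hb'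
        · exact absurd rfl hab
        · exact (huT b hb').2
        · exact fun h => (huT a ha').2 (h.symm)
        · exact hTind a ha' b hb' hab
      have hic : (insert u T).card ≤ k - 2 := le_trans (card_le_indepNum hins) hα
      rw [Finset.card_insert_of_notMem (fun h => (huT u h).1 rfl)] at hic
      omega
  · -- center (i, Sum.inr (Sum.inl m0))
    have hinj : Set.InjOn keyV (s : Set (RingEdge V p τ)) := by
      intro e1 h1 e2 h2 hkey
      by_contra hne
      rcases classify2 (hadj e1 h1) with ⟨w1, rfl, -⟩ | ⟨m1, rfl⟩ | ⟨m1, rfl⟩ <;>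
        rcases classify2 (hadj e2 h2) with ⟨w2, rfl, -⟩ | ⟨m2, rfl⟩ | ⟨m2, rfl⟩ <;>
        simp [keyV] at hkey
      · exact hne (by rw [hkey])
      · exact hind _ h1 _ h2 hne (adj_of_Q_ends (i := i) (m1 := m1) (m2 := m2) hne
          (by simp [ringEnds]) (by simp [ringEnds]))
      · exact hind _ h1 _ h2 hne (adj_of_Q_ends (i := i) (m1 := m1) (m2 := m2) hne
          (by simp [ringEnds]) (by simp [ringEnds]))
    have hcardA : (s.image keyV).card = k := by
      rw [Finset.card_image_of_injOn hinj, hcard]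
    set A := s.image keyV with hA
    set T : Finset V := Finset.univ.filter (fun w => Sum.inl w ∈ A) with hT
    have hTmem : ∀ w ∈ T, (i, Sum.inl w) ∈ s := by
      intro w hw
      rw [hT, Finset.mem_filter] at hw
      obtain ⟨e', he', hke⟩ := Finset.mem_image.mp hw.2
      rcases classify2 (hadj e' he') with ⟨w', rfl, -⟩ | ⟨m, rfl⟩ | ⟨m, rfl⟩ <;>
        simp [keyV] at hke
      exact hke ▸ he'
    have hTind : IsIndep H T := by
      intro a ha b hb hab hadj'
      exact hind _ (hTmem a ha) _ (hTmem b hb) (by simp [hab])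
        (ringGraph_adj.mpr ⟨by simp [hab], (i, Sum.inl a), by simp [ringEnds],
          (i, Sum.inl b), by simp [ringEnds], Or.inr (baseH1 hadj')⟩)
    have hTcard : T.card ≤ k - 2 := le_trans (card_le_indepNum hTind) hα
    have hnot : ¬ (Sum.inr 0 ∈ A ∧ Sum.inr 1 ∈ A) := by
      rintro ⟨h0, h1⟩
      obtain ⟨e1, he1, hke1⟩ := Finset.mem_image.mp h0
      obtain ⟨e2, he2, hke2⟩ := Finset.mem_image.mp h1
      rcases classify2 (hadj e1 he1) with ⟨w1, rfl, -⟩ | ⟨m1, rfl⟩ | ⟨m1, rfl⟩ <;>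
        simp [keyV] at hke1
      rcases classify2 (hadj e2 he2) with ⟨w2, rfl, -⟩ | ⟨m2, rfl⟩ | ⟨m2, rfl⟩ <;>
        simp [keyV] at hke2
      exact hind _ he1 _ he2 (by simp) (adj_of_Q_ends (i := i) (m1 := m1) (m2 := m2)
        (by simp) (by simp [ringEnds]) (by simp [ringEnds]))
    have hk1 : k ≤ T.card + 1 := by
      have hsub' : ∀ b : Fin 2, Sum.inr b ∉ A →
          A ⊆ insert (Sum.inr (1 - b)) (T.image Sum.inl) := by
        intro b hb a ha
        rcases a with w | b'
        · exact Finset.mem_insert_of_mem (Finset.mem_image_of_mem _ (by simp [hT, ha]))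
        · have : b' ≠ b := fun h => hb (h ▸ ha)
          have : b' = 1 - b := by omega
          exact this ▸ Finset.mem_insert_self _ _
      have key : ∃ c : V ⊕ Fin 2, A ⊆ insert c (T.image Sum.inl) := by
        by_cases h0 : Sum.inr 0 ∈ A
        · have h1 : Sum.inr 1 ∉ A := fun h1 => hnot ⟨h0, h1⟩
          exact ⟨_, hsub' 1 h1⟩
        · exact ⟨_, hsub' 0 h0⟩
      obtain ⟨c, hc⟩ := key
      calc k = A.card := hcardA.symm
        _ ≤ (insert c (T.image Sum.inl)).card := Finset.card_le_card hc
        _ ≤ (T.image Sum.inl).card + 1 := Finset.card_insert_le _ _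
        _ ≤ T.card + 1 := add_le_add_left Finset.card_image_le 1
    omega
  · -- center (i, Sum.inr (Sum.inr m0))
    have hinj : Set.InjOn keyV (s : Set (RingEdge V p τ)) := by
      intro e1 h1 e2 h2 hkey
      by_contra hne
      rcases classify3 (hadj e1 h1) with ⟨w1, rfl, -⟩ | ⟨m1, rfl⟩ | ⟨m1, rfl⟩ <;>
        rcases classify3 (hadj e2 h2) with ⟨w2, rfl, -⟩ | ⟨m2, rfl⟩ | ⟨m2, rfl⟩ <;>
        simp [keyV] at hkey
      · exact hne (by rw [hkey])
      · exact hind _ h1 _ h2 hne (adj_of_Q_ends (i := i) (m1 := m1) (m2 := m2) hne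
          (by simp [ringEnds]) (by simp [ringEnds]))
      · exact hind _ h1 _ h2 hne (adj_of_Q_ends (i := i) (m1 := m1) (m2 := m2) hne
          (by simp [ringEnds]) (by simp [ringEnds]))
    have hcardA : (s.image keyV).card = k := by
      rw [Finset.card_image_of_injOn hinj, hcard]
    set A := s.image keyV with hA
    set T : Finset V := Finset.univ.filter (fun w => Sum.inl w ∈ A) with hT
    have hTmem : ∀ w ∈ T, (i + 1, Sum.inl w) ∈ s := by
      intro w hw
      rw [hT, Finset.mem_filter] at hw
      obtain ⟨e', he', hke⟩ := Finset.mem_image.mp hw.2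
      rcases classify3 (hadj e' he') with ⟨w', rfl, -⟩ | ⟨m, rfl⟩ | ⟨m, rfl⟩ <;>
        simp [keyV] at hke
      exact hke ▸ he'
    have hTind : IsIndep H T := by
      intro a ha b hb hab hadj'
      exact hind _ (hTmem a ha) _ (hTmem b hb) (by simp [hab])
        (ringGraph_adj.mpr ⟨by simp [hab], (i + 1, Sum.inl a), by simp [ringEnds],
          (i + 1, Sum.inl b), by simp [ringEnds], Or.inr (baseH1 hadj')⟩)
    have hTcard : T.card ≤ k - 2 := le_trans (card_le_indepNum hTind) hα
    have hnot : ¬ (Sum.inr 0 ∈ A ∧ Sum.inr 1 ∈ A) := by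
      rintro ⟨h0, h1⟩
      obtain ⟨e1, he1, hke1⟩ := Finset.mem_image.mp h0
      obtain ⟨e2, he2, hke2⟩ := Finset.mem_image.mp h1
      rcases classify3 (hadj e1 he1) with ⟨w1, rfl, -⟩ | ⟨m1, rfl⟩ | ⟨m1, rfl⟩ <;>
        simp [keyV] at hke1
      rcases classify3 (hadj e2 he2) with ⟨w2, rfl, -⟩ | ⟨m2, rfl⟩ | ⟨m2, rfl⟩ <;>
        simp [keyV] at hke2
      exact hind _ he1 _ he2 (by simp) (adj_of_Q_ends (i := i) (m1 := m1) (m2 := m2)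
        (by simp) (by simp [ringEnds]) (by simp [ringEnds]))
    have hk1 : k ≤ T.card + 1 := by
      have hsub' : ∀ b : Fin 2, Sum.inr b ∉ A →
          A ⊆ insert (Sum.inr (1 - b)) (T.image Sum.inl) := by
        intro b hb a ha
        rcases a with w | b'
        · exact Finset.mem_insert_of_mem (Finset.mem_image_of_mem _ (by simp [hT, ha]))
        · have : b' ≠ b := fun h => hb (h ▸ ha)
          have : b' = 1 - b := by omega
          exact this ▸ Finset.mem_insert_self _ _
      have key : ∃ c : V ⊕ Fin 2, A ⊆ insert c (T.image Sum.inl) := by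
        by_cases h0 : Sum.inr 0 ∈ A
        · have h1 : Sum.inr 1 ∉ A := fun h1 => hnot ⟨h0, h1⟩
          exact ⟨_, hsub' 1 h1⟩
        · exact ⟨_, hsub' 0 h0⟩
      obtain ⟨c, hc⟩ := key
      calc k = A.card := hcardA.symm
        _ ≤ (insert c (T.image Sum.inl)).card := Finset.card_le_card hc
        _ ≤ (T.image Sum.inl).card + 1 := Finset.card_insert_le _ _
        _ ≤ T.card + 1 := add_le_add_left Finset.card_image_le 1
    omega
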